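/- Let λ ≠ 1, γ = 2/(λ−1), σ ∈ ℝ, u₀ ∈ C²(ℝ) 1-periodic, and T ∈ (0,∞]. Let η : [0,T) × ℝ → ℝ be C³ with η(t,θ+1) = η(t,θ)+1, η_θ(t,θ) > 0, η(0,θ) = θ, η_t(0,θ) = u₀(θ), satisfying η_ttθ = −((λ−3)/2) η_tθ²/η_θ + [λσ(η_t − σ) + ((λ−3)/2) E(t)] η_θ, where E(t) = ∫₀¹ η_tθ(t,φ)²/η_θ(t,φ) dφ. Define x(t,θ) = η_θ(t,θ)^{1/γ}, y(t,θ) = −γ x_θ(t,θ) + σ x(t,θ) ∫₀ᵗ x(τ,θ)^γ dτ, and F(t,θ) = (λ(λ−1)σ/2)(η_t(t,θ) − σ) + ((λ−1)(λ−3)/4) E(t). Then x_tt(t,θ) = F(t,θ) x(t,θ) and y_tt(t,θ) = F(t,θ) y(t,θ) for all (t,θ); moreover E(t) = γ² ∫₀¹ x(t,φ)^{γ−2} x_t(t,φ)² dφ, and the initial values are x(0,θ) = 1, x_t(0,θ) = u₀'(θ)/γ, y(0,θ) = 0, y_t(0,θ) = σ − u₀''(θ). -/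

import Mathlib

open Set
open MeasureTheory intervalIntegral Filter Topology

private lemma ftc_ico (f : ℝ → ℝ) (r : ℝ) (hr : 0 < r) (hf : ContinuousOn f (Ico 0 r))
    (t : ℝ) (ht : t ∈ Ico 0 r) :
    HasDerivWithinAt (fun s => ∫ τ in (0:ℝ)..s, f τ) (f t) (Ico 0 r) t := by
  have hint : IntervalIntegrable f volume 0 t := by
    apply ContinuousOn.intervalIntegrable
    rw [uIcc_of_le ht.1]
    exact hf.mono (Icc_subset_Ico_right ht.2)
  rcases eq_or_lt_of_le ht.1 with h0 | h0
  · subst h0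
    have hIcomem : Ico (0:ℝ) r ∈ 𝓝[≥] (0:ℝ) := by
      rw [← Ici_inter_Iio]
      exact inter_mem_nhdsWithin _ (Iio_mem_nhds hr)
    have hmeas : StronglyMeasurableAtFilter f (𝓝[>] (0:ℝ)) volume :=
      ⟨Ico 0 r, nhdsWithin_mono _ Ioi_subset_Ici_self hIcomem,
        hf.aestronglyMeasurable measurableSet_Ico⟩
    have hcw : ContinuousWithinAt f (Ioi (0:ℝ)) 0 := by
      have h1 : ContinuousWithinAt f (Ico 0 r) 0 := hf 0 ht
      have h2 : Ioi (0:ℝ) =ᶠ[𝓝 (0:ℝ)] Ioo 0 r := by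
        rw [eventuallyEq_set]
        filter_upwards [Iio_mem_nhds hr] with s hs
        simp only [mem_Ioi, mem_Ioo]
        exact ⟨fun h => ⟨h, hs⟩, fun h => h.1⟩
      unfold ContinuousWithinAt
      rw [nhdsWithin_eq_iff_eventuallyEq.mpr h2]
      exact h1.mono Ioo_subset_Ico_self
    exact (integral_hasDerivWithinAt_right hint hmeas hcw).mono Ico_subset_Ici_self
  · have hmem : Ico (0:ℝ) r ∈ 𝓝 t := Ico_mem_nhds h0 ht.2
    have hca : ContinuousAt f t := hf.continuousAt hmem
    have hmeas : StronglyMeasurableAtFilter f (𝓝 t) volume :=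
      ⟨Ico 0 r, hmem, hf.aestronglyMeasurable measurableSet_Ico⟩
    exact (integral_hasDerivAt_right hint hmeas hca).hasDerivWithinAt


/-- the general transformation to the solar model. With γ = 2/(λ-1),
x = η_θ^{1/γ} and y = -γ x_θ + σ x ∫₀ᵗ x^γ dτ satisfy the central force system
x_tt = F x, y_tt = F y with F = (λ(λ-1)σ/2)(η_t - σ) + ((λ-1)(λ-3)/4) E(t),
E(t) = ∫₀¹ η_tθ²/η_θ = γ² ∫₀¹ x^{γ-2} x_t², and initial conditions
x(0)=1, x_t(0)=u₀'/γ, y(0)=0, y_t(0)=σ-u₀''. -/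
theorem stmt_5 (lam : ℝ) (hlam : lam ≠ 1) (γ : ℝ) (hγ : γ = 2 / (lam - 1))
    (σ : ℝ) (u₀ : ℝ → ℝ) (hu₀ : ContDiff ℝ 2 u₀) (hu₀per : ∀ θ : ℝ, u₀ (θ + 1) = u₀ θ)
    (T : EReal) (hT : 0 < T)
    (J : Set ℝ) (hJ : J = {t : ℝ | 0 ≤ t ∧ (t : EReal) < T})
    -- η is a C³ family of circle diffeomorphisms, with partial derivatives
    -- ηt = η_t, ηθ = η_θ, ηtθ = η_tθ, ηθθ = η_θθ, ηttθ = η_ttθ, ηtθθ = η_tθθ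
    (η ηt ηθ ηtθ ηθθ ηttθ ηtθθ : ℝ → ℝ → ℝ)
    (hη0 : ∀ θ : ℝ, η 0 θ = θ)
    (hηt0 : ∀ θ : ℝ, ηt 0 θ = u₀ θ)
    (hηper : ∀ t ∈ J, ∀ θ : ℝ, η t (θ + 1) = η t θ + 1)
    (hηθpos : ∀ t ∈ J, ∀ θ : ℝ, 0 < ηθ t θ)
    (hηt : ∀ θ : ℝ, ∀ t ∈ J, HasDerivWithinAt (fun s => η s θ) (ηt t θ) J t)
    (hηθ : ∀ t ∈ J, ∀ θ : ℝ, HasDerivAt (η t) (ηθ t θ) θ)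
    (hηtθ : ∀ t ∈ J, ∀ θ : ℝ, HasDerivAt (ηt t) (ηtθ t θ) θ)
    (hηθθ : ∀ t ∈ J, ∀ θ : ℝ, HasDerivAt (ηθ t) (ηθθ t θ) θ)
    (hηθt : ∀ θ : ℝ, ∀ t ∈ J, HasDerivWithinAt (fun s => ηθ s θ) (ηtθ t θ) J t)
    (hηttθ : ∀ θ : ℝ, ∀ t ∈ J, HasDerivWithinAt (fun s => ηtθ s θ) (ηttθ t θ) J t)
    (hηtθθ : ∀ t ∈ J, ∀ θ : ℝ, HasDerivAt (ηtθ t) (ηtθθ t θ) θ)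
    (hηθθt : ∀ θ : ℝ, ∀ t ∈ J, HasDerivWithinAt (fun s => ηθθ s θ) (ηtθθ t θ) J t)
    (hηθc : ContinuousOn (fun p : ℝ × ℝ => ηθ p.1 p.2) (J ×ˢ univ))
    (hηtθc : ContinuousOn (fun p : ℝ × ℝ => ηtθ p.1 p.2) (J ×ˢ univ))
    (hηθθc : ContinuousOn (fun p : ℝ × ℝ => ηθθ p.1 p.2) (J ×ˢ univ))
    (hηttθc : ContinuousOn (fun p : ℝ × ℝ => ηttθ p.1 p.2) (J ×ˢ univ))
    (hηtθθc : ContinuousOn (fun p : ℝ × ℝ => ηtθθ p.1 p.2) (J ×ˢ univ))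
    -- the Lagrangian form of the μ-λ equation
    (hPDE : ∀ t ∈ J, ∀ θ : ℝ, ηttθ t θ
        = -((lam - 3) / 2) * ηtθ t θ ^ 2 / ηθ t θ
          + (lam * σ * (ηt t θ - σ)
              + (lam - 3) / 2 * (∫ φ in (0:ℝ)..1, ηtθ t φ ^ 2 / ηθ t φ)) * ηθ t θ) :
    ∃ X Xt Y Yt F : ℝ → ℝ → ℝ,
      -- the definitions of x, y, F
      (∀ t ∈ J, ∀ θ : ℝ, X t θ = ηθ t θ ^ (1 / γ)) ∧
      (∀ t ∈ J, ∀ θ : ℝ,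
        Y t θ = -γ * deriv (X t) θ + σ * X t θ * ∫ τ in (0:ℝ)..t, X τ θ ^ γ) ∧
      (∀ t ∈ J, ∀ θ : ℝ, F t θ = lam * (lam - 1) * σ / 2 * (ηt t θ - σ)
          + (lam - 1) * (lam - 3) / 4 * (∫ φ in (0:ℝ)..1, ηtθ t φ ^ 2 / ηθ t φ)) ∧
      -- the central force system x_tt = F x, y_tt = F y
      (∀ θ : ℝ, ∀ t ∈ J, HasDerivWithinAt (fun s => X s θ) (Xt t θ) J t) ∧
      (∀ θ : ℝ, ∀ t ∈ J, HasDerivWithinAt (fun s => Xt s θ) (F t θ * X t θ) J t) ∧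
      (∀ θ : ℝ, ∀ t ∈ J, HasDerivWithinAt (fun s => Y s θ) (Yt t θ) J t) ∧
      (∀ θ : ℝ, ∀ t ∈ J, HasDerivWithinAt (fun s => Yt s θ) (F t θ * Y t θ) J t) ∧
      -- the energy E(t) in the transformed variables
      (∀ t ∈ J, (∫ φ in (0:ℝ)..1, ηtθ t φ ^ 2 / ηθ t φ)
          = γ ^ 2 * ∫ φ in (0:ℝ)..1, X t φ ^ (γ - 2) * Xt t φ ^ 2) ∧
      -- the initial conditions
      (∀ θ : ℝ, X 0 θ = 1) ∧
      (∀ θ : ℝ, Xt 0 θ = deriv u₀ θ / γ) ∧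
      (∀ θ : ℝ, Y 0 θ = 0) ∧
      (∀ θ : ℝ, Yt 0 θ = σ - deriv (deriv u₀) θ) := by
  -- basic constants
  have hl1 : lam - 1 ≠ 0 := sub_ne_zero.mpr hlam
  have hγ0 : γ ≠ 0 := by rw [hγ]; exact div_ne_zero two_ne_zero hl1
  obtain ⟨a, ha⟩ : ∃ a : ℝ, a = (lam - 1) / 2 := ⟨_, rfl⟩
  have h1γ : 1 / γ = a := by rw [hγ, ha]; field_simp
  have hγa : γ * a = 1 := by rw [hγ, ha]; field_simp
  have haγ : a * γ = 1 := by rw [mul_comm]; exact hγa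
  have hγlam : γ * (lam - 1) = 2 := by rw [hγ]; field_simp
  -- membership facts for J
  have hmem : ∀ {t : ℝ}, t ∈ J ↔ 0 ≤ t ∧ (t : EReal) < T := by intro t; rw [hJ]; rfl
  have hJ0 : (0:ℝ) ∈ J := hmem.mpr ⟨le_refl _, by exact_mod_cast hT⟩
  have hsub : ∀ {t s : ℝ}, t ∈ J → 0 ≤ s → s ≤ t → s ∈ J := by
    intro t s ht hs hst
    exact hmem.mpr ⟨hs, lt_of_le_of_lt (EReal.coe_le_coe_iff.mpr hst) (hmem.mp ht).2⟩
  have hJb : ∀ t ∈ J, ∃ b : ℝ, t < b ∧ Ico 0 b ⊆ J ∧ J =ᶠ[𝓝 t] Ico 0 b := by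
    intro t ht
    obtain ⟨ht0, htT⟩ := hmem.mp ht
    obtain ⟨b, htb, hbT⟩ := EReal.lt_iff_exists_real_btwn.mp htT
    have htb' : t < b := EReal.coe_lt_coe_iff.mp htb
    refine ⟨b, htb', ?_, ?_⟩
    · intro s hs
      exact hmem.mpr ⟨hs.1, lt_trans (EReal.coe_lt_coe_iff.mpr hs.2) hbT⟩
    · rw [eventuallyEq_set]
      have : Ioo (t - (b - t)) b ∈ 𝓝 t := Ioo_mem_nhds (by linarith) htb'
      filter_upwards [this] with s hs
      constructor
      · intro hsJ; exact ⟨(hmem.mp hsJ).1, hs.2⟩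
      · intro hsI; exact hmem.mpr ⟨hsI.1, lt_trans (EReal.coe_lt_coe_iff.mpr hs.2) hbT⟩
  have hnh : ∀ {t : ℝ}, t ∈ J → 0 < t → J ∈ 𝓝 t := by
    intro t ht ht0
    obtain ⟨b, htb, hIco, _⟩ := hJb t ht
    exact mem_of_superset (Ioo_mem_nhds ht0 htb) (fun s hs => hIco ⟨hs.1.le, hs.2⟩)
  -- FTC within J
  have FTCJ : ∀ f : ℝ → ℝ, ContinuousOn f J → ∀ t ∈ J,
      HasDerivWithinAt (fun s => ∫ τ in (0:ℝ)..s, f τ) (f t) J t := by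
    intro f hf t ht
    obtain ⟨b, htb, hIco, hEq⟩ := hJb t ht
    have hb0 : 0 < b := lt_of_le_of_lt (hmem.mp ht).1 htb
    exact (hasDerivWithinAt_congr_set hEq).mpr
      (ftc_ico f b hb0 (hf.mono hIco) t ⟨(hmem.mp ht).1, htb⟩)
  -- continuity in time of jointly continuous functions
  have contOfJoint : ∀ g : ℝ → ℝ → ℝ, ContinuousOn (fun p : ℝ × ℝ => g p.1 p.2) (J ×ˢ univ) →
      ∀ θ : ℝ, ContinuousOn (fun s => g s θ) J := by
    intro g hg θ
    exact hg.comp (Continuous.continuousOn (continuous_id.prodMk continuous_const)) (fun s hs => ⟨hs, mem_univ θ⟩)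
  -- positivity
  have hw : ∀ {t : ℝ}, t ∈ J → ∀ θ : ℝ, 0 < ηθ t θ := fun ht θ => hηθpos _ ht θ
  have hwne : ∀ {t : ℝ}, t ∈ J → ∀ θ : ℝ, ηθ t θ ≠ 0 := fun ht θ => (hw ht θ).ne'
  -- the functions
  obtain ⟨X, hX⟩ : ∃ f : ℝ → ℝ → ℝ, f = fun t θ => ηθ t θ ^ a := ⟨_, rfl⟩
  obtain ⟨Xt, hXt⟩ : ∃ f : ℝ → ℝ → ℝ, f = fun t θ => a * ηθ t θ ^ (a-1) * ηtθ t θ := ⟨_, rfl⟩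
  obtain ⟨XΘ, hXΘ⟩ : ∃ f : ℝ → ℝ → ℝ, f = fun t θ => a * ηθ t θ ^ (a-1) * ηθθ t θ := ⟨_, rfl⟩
  obtain ⟨Q, hQ⟩ : ∃ f : ℝ → ℝ → ℝ, f = fun t θ =>
    a * (a-1) * ηθ t θ ^ (a-2) * ηtθ t θ ^ 2 + a * ηθ t θ ^ (a-1) * ηttθ t θ := ⟨_, rfl⟩
  obtain ⟨M, hM⟩ : ∃ f : ℝ → ℝ → ℝ, f = fun t θ =>
    a * (a-1) * ηθ t θ ^ (a-2) * ηtθ t θ * ηθθ t θ + a * ηθ t θ ^ (a-1) * ηtθθ t θ := ⟨_, rfl⟩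
  obtain ⟨G, hG⟩ : ∃ f : ℝ → ℝ → ℝ, f = fun t θ => ∫ τ in (0:ℝ)..t, ηθ τ θ := ⟨_, rfl⟩
  obtain ⟨Fn, hFn⟩ : ∃ f : ℝ → ℝ → ℝ, f = fun t θ =>
    lam * (lam - 1) * σ / 2 * (ηt t θ - σ)
      + (lam - 1) * (lam - 3) / 4 * (∫ φ in (0:ℝ)..1, ηtθ t φ ^ 2 / ηθ t φ) := ⟨_, rfl⟩
  obtain ⟨Y, hY⟩ : ∃ f : ℝ → ℝ → ℝ, f = fun t θ =>
    -γ * XΘ t θ + σ * (X t θ * G t θ) := ⟨_, rfl⟩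
  obtain ⟨Yt, hYt⟩ : ∃ f : ℝ → ℝ → ℝ, f = fun t θ =>
    -γ * M t θ + σ * (Xt t θ * G t θ + X t θ * ηθ t θ) := ⟨_, rfl⟩
  obtain ⟨D, hD⟩ : ∃ f : ℝ → ℝ → ℝ, f = fun t θ =>
    lam * (lam - 1) * σ / 2 * ηtθ t θ * X t θ + Q t θ * XΘ t θ / X t θ := ⟨_, rfl⟩
  obtain ⟨D', hD'⟩ : ∃ f : ℝ → ℝ → ℝ, f = fun t θ =>
    lam * (lam - 1) * σ / 2 * ηtθ t θ * X t θ + Fn t θ * XΘ t θ := ⟨_, rfl⟩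
  
  -- joint continuity building blocks
  have hPc : ∀ p : ℝ, ContinuousOn (fun q : ℝ × ℝ => ηθ q.1 q.2 ^ p) (J ×ˢ univ) :=
    fun p => hηθc.rpow_const (fun q hq => Or.inl (hwne hq.1 q.2))
  have hXpos : ∀ {t : ℝ}, t ∈ J → ∀ θ : ℝ, 0 < X t θ := by
    intro t ht θ; rw [hX]; exact Real.rpow_pos_of_pos (hw ht θ) a
  have hXc : ContinuousOn (fun p : ℝ × ℝ => X p.1 p.2) (J ×ˢ univ) := by
    rw [hX]; exact hPc a
  have hXtc : ContinuousOn (fun p : ℝ × ℝ => Xt p.1 p.2) (J ×ˢ univ) := by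
    rw [hXt]; exact (continuousOn_const.mul (hPc (a-1))).mul hηtθc
  have hXΘc : ContinuousOn (fun p : ℝ × ℝ => XΘ p.1 p.2) (J ×ˢ univ) := by
    rw [hXΘ]; exact (continuousOn_const.mul (hPc (a-1))).mul hηθθc
  have hQc : ContinuousOn (fun p : ℝ × ℝ => Q p.1 p.2) (J ×ˢ univ) := by
    rw [hQ]
    exact (((continuousOn_const.mul (hPc (a-2))).mul (hηtθc.pow 2)).add
      ((continuousOn_const.mul (hPc (a-1))).mul hηttθc))
  have hDc : ContinuousOn (fun p : ℝ × ℝ => D p.1 p.2) (J ×ˢ univ) := by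
    rw [hD]
    exact ((continuousOn_const.mul hηtθc).mul hXc).add ((hQc.mul hXΘc).div hXc
      (fun p hp => (hXpos hp.1 p.2).ne'))
  -- time derivatives of X, Xt, XΘ, G
  have hXder : ∀ θ : ℝ, ∀ t ∈ J, HasDerivWithinAt (fun s => X s θ) (Xt t θ) J t := by
    intro θ t ht
    have h := (hηθt θ t ht).rpow_const (p := a) (Or.inl (hwne ht θ))
    simp only [hX, hXt]
    convert h using 1
    ring
  have hQder : ∀ θ : ℝ, ∀ t ∈ J, HasDerivWithinAt (fun s => Xt s θ) (Q t θ) J t := by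
    intro θ t ht
    have h := (((hηθt θ t ht).rpow_const (p := a-1)
      (Or.inl (hwne ht θ))).const_mul a).mul (hηttθ θ t ht)
    simp only [hXt, hQ]
    convert h using 1
    · rfl
    · rfl
    · rfl
    rw [show a-1-1 = a-2 by ring]
    ring
  have hXΘder : ∀ θ : ℝ, ∀ t ∈ J, HasDerivWithinAt (fun s => XΘ s θ) (M t θ) J t := by
    intro θ t ht
    have h := (((hηθt θ t ht).rpow_const (p := a-1)
      (Or.inl (hwne ht θ))).const_mul a).mul (hηθθt θ t ht)
    simp only [hXΘ, hM]
    convert h using 1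
    · rfl
    · rfl
    · rfl
    rw [show a-1-1 = a-2 by ring]
    ring
  have hGder : ∀ θ : ℝ, ∀ t ∈ J, HasDerivWithinAt (fun s => G s θ) (ηθ t θ) J t := by
    intro θ t ht
    simp only [hG]
    exact FTCJ _ (contOfJoint _ hηθc θ) t ht
  -- θ-derivatives of X and Xt
  have hXtheta : ∀ t ∈ J, ∀ θ : ℝ, HasDerivAt (fun θ' => X t θ') (XΘ t θ) θ := by
    intro t ht θ
    have h := (hηθθ t ht θ).rpow_const (p := a) (Or.inl (hwne ht θ))
    simp only [hX, hXΘ]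
    convert h using 1
    ring
  have hXtTheta : ∀ t ∈ J, ∀ θ : ℝ, HasDerivAt (fun θ' => Xt t θ') (M t θ) θ := by
    intro t ht θ
    have h := (((hηθθ t ht θ).rpow_const (p := a-1)
      (Or.inl (hwne ht θ))).const_mul a).mul (hηtθθ t ht θ)
    simp only [hXt, hM]
    convert h using 1
    · rfl
    · rfl
    · rfl
    rw [show a-1-1 = a-2 by ring]
    ring
  -- PDE in terms of Q
  have hQF : ∀ t ∈ J, ∀ θ : ℝ, Q t θ = Fn t θ * X t θ := by
    intro t ht θ
    have hne := hwne ht θ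
    have e1 : ηθ t θ ^ (a-1) = ηθ t θ ^ (a-2) * ηθ t θ := by
      have h1 := Real.rpow_add_one hne (a-2)
      rw [show a-2+1 = a-1 by ring] at h1
      exact h1
    have e2 : ηθ t θ ^ a = ηθ t θ ^ (a-2) * ηθ t θ * ηθ t θ := by
      have h2 := Real.rpow_add_one hne (a-1)
      rw [show a-1+1 = a by ring] at h2
      rw [h2, e1]
    simp only [hQ, hFn, hX]
    rw [hPDE t ht θ, e2, e1, ha]
    field_simp
    ring
  -- initial values
  have hθ0 : ∀ θ : ℝ, ηθ 0 θ = 1 := by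
    intro θ
    have h1 : HasDerivAt (η 0) (ηθ 0 θ) θ := hηθ 0 hJ0 θ
    rw [show η 0 = fun x => x from funext hη0] at h1
    exact h1.unique (hasDerivAt_id θ)
  have hdu : Differentiable ℝ u₀ := hu₀.differentiable (by norm_num)
  have htθ0 : ∀ θ : ℝ, ηtθ 0 θ = deriv u₀ θ := by
    intro θ
    have h1 : HasDerivAt (ηt 0) (ηtθ 0 θ) θ := hηtθ 0 hJ0 θ
    rw [show ηt 0 = u₀ from funext hηt0] at h1
    exact h1.unique (hdu θ).hasDerivAt
  have hθθ0 : ∀ θ : ℝ, ηθθ 0 θ = 0 := by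
    intro θ
    have h1 : HasDerivAt (ηθ 0) (ηθθ 0 θ) θ := hηθθ 0 hJ0 θ
    rw [show ηθ 0 = fun _ => (1:ℝ) from funext hθ0] at h1
    exact h1.unique (hasDerivAt_const θ 1)
  have hdu2 : Differentiable ℝ (deriv u₀) := by
    have h21 : ContDiff ℝ (1+1 : ℕ) u₀ := by exact_mod_cast hu₀
    exact (((contDiff_succ_iff_deriv (n := 1)).mp (by exact_mod_cast h21)).2.2).differentiable one_ne_zero
  have htθθ0 : ∀ θ : ℝ, ηtθθ 0 θ = deriv (deriv u₀) θ := by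
    intro θ
    have h1 : HasDerivAt (ηtθ 0) (ηtθθ 0 θ) θ := hηtθθ 0 hJ0 θ
    rw [show ηtθ 0 = deriv u₀ from funext htθ0] at h1
    exact h1.unique (hdu2 θ).hasDerivAt
  
  have ht0 : ∀ {t : ℝ}, t ∈ J → 0 ≤ t := fun ht => (hmem.mp ht).1
  have hIccJ : ∀ {t : ℝ}, t ∈ J → Icc (0:ℝ) t ⊆ J := by
    intro t ht s hs; exact hsub ht hs.1 hs.2
  have hXtint : ∀ θ : ℝ, ∀ t ∈ J, (∫ s in (0:ℝ)..t, Fn s θ * X s θ) = Xt t θ - Xt 0 θ := by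
    intro θ t ht
    have hQint : IntervalIntegrable (fun s => Q s θ) volume 0 t := by
      apply ContinuousOn.intervalIntegrable
      rw [uIcc_of_le (ht0 ht)]
      exact (contOfJoint Q hQc θ).mono (hIccJ ht)
    have hcont : ContinuousOn (fun s => Xt s θ) (Icc 0 t) := fun s hs =>
      ((hQder θ s (hIccJ ht hs)).continuousWithinAt).mono (hIccJ ht)
    have hderiv : ∀ s ∈ Ioo (0:ℝ) t, HasDerivWithinAt (fun s' => Xt s' θ) (Q s θ) (Ioi s) s := by
      intro s hs
      have hsJ : s ∈ J := hIccJ ht ⟨hs.1.le, hs.2.le⟩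
      exact ((hQder θ s hsJ).hasDerivAt (hnh hsJ hs.1)).hasDerivWithinAt
    have h2 := integral_eq_sub_of_hasDeriv_right_of_le (ht0 ht) hcont hderiv hQint
    rw [← h2]
    apply integral_congr
    intro s hs
    rw [uIcc_of_le (ht0 ht)] at hs
    exact (hQF s (hIccJ ht hs) θ).symm
  have hDD' : ∀ s ∈ J, ∀ θ' : ℝ, D' s θ' = D s θ' := by
    intro s hs θ'
    simp only [hD, hD']
    rw [hQF s hs θ']
    have hx := (hXpos hs θ').ne'
    field_simp
  have hMint : ∀ θ : ℝ, ∀ t ∈ J, M t θ = M 0 θ + ∫ s in (0:ℝ)..t, D s θ := by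
    intro θ t ht
    have htt0 := ht0 ht
    have hIoc : Set.uIoc (0:ℝ) t ⊆ J := by
      rw [uIoc_of_le htt0]; intro s hs; exact hsub ht hs.1.le hs.2
    have hmeasQ : ∀ θ' : ℝ, AEStronglyMeasurable (fun s => Fn s θ' * X s θ')
        (volume.restrict (Set.uIoc (0:ℝ) t)) := by
      intro θ'
      have h1 : AEStronglyMeasurable (fun s => Q s θ') (volume.restrict (Set.uIoc (0:ℝ) t)) :=
        ((contOfJoint Q hQc θ').mono hIoc).aestronglyMeasurable measurableSet_uIoc
      apply h1.congr
      filter_upwards [ae_restrict_mem measurableSet_uIoc] with s hs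
      exact hQF s (hIoc hs) θ'
    have hFint : IntervalIntegrable (fun s => Fn s θ * X s θ) volume 0 t := by
      have hQint : IntervalIntegrable (fun s => Q s θ) volume 0 t := by
        apply ContinuousOn.intervalIntegrable
        rw [uIcc_of_le htt0]
        exact (contOfJoint Q hQc θ).mono (hIccJ ht)
      apply hQint.congr
      intro s hs
      exact hQF s (hIoc hs) θ
    have hD'meas : AEStronglyMeasurable (fun s => D' s θ) (volume.restrict (Set.uIoc (0:ℝ) t)) := by
      have h1 : AEStronglyMeasurable (fun s => D s θ) (volume.restrict (Set.uIoc (0:ℝ) t)) :=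
        ((contOfJoint D hDc θ).mono hIoc).aestronglyMeasurable measurableSet_uIoc
      apply h1.congr
      filter_upwards [ae_restrict_mem measurableSet_uIoc] with s hs
      exact (hDD' s (hIoc hs) θ).symm
    obtain ⟨C, hC⟩ : ∃ C, ∀ p ∈ Icc (0:ℝ) t ×ˢ Icc (θ-1) (θ+1), ‖D p.1 p.2‖ ≤ C := by
      apply (isCompact_Icc.prod isCompact_Icc).exists_bound_of_continuousOn
      exact hDc.mono (fun p hp => ⟨hIccJ ht hp.1, mem_univ _⟩)
    have hball : Metric.ball θ 1 ⊆ Icc (θ-1) (θ+1) := by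
      rw [Real.ball_eq_Ioo]; exact Ioo_subset_Icc_self
    have hpar : HasDerivAt (fun θ' => ∫ s in (0:ℝ)..t, Fn s θ' * X s θ')
        (∫ s in (0:ℝ)..t, D' s θ) θ := by
      apply (hasDerivAt_integral_of_dominated_loc_of_deriv_le
        (F := fun θ' s => Fn s θ' * X s θ') (F' := fun θ' s => D' s θ')
        (bound := fun _ => C) (Metric.ball_mem_nhds θ one_pos) ?_ hFint hD'meas ?_ ?_ ?_).2
      · exact Eventually.of_forall hmeasQ
      · apply Eventually.of_forall
        intro s hs θ' hθ'
        show ‖D' s θ'‖ ≤ C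
        rw [hDD' s (hIoc hs) θ']
        refine hC (s, θ') ⟨?_, hball hθ'⟩
        rw [uIoc_of_le htt0] at hs
        exact ⟨hs.1.le, hs.2⟩
      · exact intervalIntegrable_const
      · apply Eventually.of_forall
        intro s hs θ' hθ'
        have hsJ := hIoc hs
        have hF : HasDerivAt (fun θ'' => Fn s θ'')
            (lam * (lam - 1) * σ / 2 * ηtθ s θ') θ' := by
          rw [hFn]
          exact (((hηtθ s hsJ θ').sub_const σ).const_mul
            (lam * (lam - 1) * σ / 2)).add_const
            ((lam - 1) * (lam - 3) / 4 * ∫ φ in (0:ℝ)..1, ηtθ s φ ^ 2 / ηθ s φ)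
        have h := hF.mul (hXtheta s hsJ θ')
        show HasDerivAt (fun θ'' => Fn s θ'' * X s θ'') (D' s θ') θ'
        simp only [hD']
        exact h
    have hfun : (fun θ' => ∫ s in (0:ℝ)..t, Fn s θ' * X s θ')
        = fun θ' => Xt t θ' - Xt 0 θ' := funext (fun θ' => hXtint θ' t ht)
    rw [hfun] at hpar
    have hlhs : HasDerivAt (fun θ' => Xt t θ' - Xt 0 θ') (M t θ - M 0 θ) θ :=
      (hXtTheta t ht θ).sub (hXtTheta 0 hJ0 θ)
    have huniq := hlhs.unique hpar
    have hDint : (∫ s in (0:ℝ)..t, D' s θ) = ∫ s in (0:ℝ)..t, D s θ := by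
      apply integral_congr
      intro s hs
      rw [uIcc_of_le htt0] at hs
      exact hDD' s (hIccJ ht hs) θ
    rw [hDint] at huniq
    linarith [huniq]
  have hMder : ∀ θ : ℝ, ∀ t ∈ J, HasDerivWithinAt (fun s => M s θ) (D t θ) J t := by
    intro θ t ht
    have h := (FTCJ (fun s => D s θ) (contOfJoint D hDc θ) t ht).const_add (M 0 θ)
    exact h.congr (fun s hs => hMint θ s hs) (hMint θ t ht)
  
  refine ⟨X, Xt, Y, Yt, Fn, ?_, ?_, ?_, ?_, ?_, ?_, ?_, ?_, ?_, ?_, ?_, ?_⟩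
  · -- X definition
    intro t ht θ
    simp only [hX, h1γ]
  · -- Y definition
    intro t ht θ
    have hd : deriv (X t) θ = XΘ t θ := (hXtheta t ht θ).deriv
    have hi : (∫ τ in (0:ℝ)..t, X τ θ ^ γ) = G t θ := by
      simp only [hG]
      apply integral_congr
      intro τ hτ
      rw [uIcc_of_le (ht0 ht)] at hτ
      have hsJ := hIccJ ht hτ
      simp only [hX]
      rw [← Real.rpow_mul (hw hsJ θ).le, haγ, Real.rpow_one]
    rw [hd, hi, hY]
    ring
  · -- F definition
    intro t ht θ
    rw [hFn]
  · -- X equation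
    exact fun θ t ht => hXder θ t ht
  · -- Xt equation
    intro θ t ht
    have h := hQder θ t ht
    rwa [hQF t ht θ] at h
  · -- Y derivative
    intro θ t ht
    have h := ((hXΘder θ t ht).const_mul (-γ)).add
      (((hXder θ t ht).mul (hGder θ t ht)).const_mul σ)
    simp only [hY, hYt]
    exact h
  · -- Yt equation
    intro θ t ht
    have hxtt : HasDerivWithinAt (fun s => Xt s θ) (Fn t θ * X t θ) J t := by
      have h := hQder θ t ht
      rwa [hQF t ht θ] at h
    have h := ((hMder θ t ht).const_mul (-γ)).add
      (((hxtt.mul (hGder θ t ht)).add ((hXder θ t ht).mul (hηθt θ t ht))).const_mul σ)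
    have hshape : HasDerivWithinAt (fun s => Yt s θ)
        (-γ * D t θ + σ * ((Fn t θ * X t θ * G t θ + Xt t θ * ηθ t θ)
          + (Xt t θ * ηθ t θ + X t θ * ηtθ t θ))) J t := by
      simp only [hYt]
      exact h
    have hne := hwne ht θ
    have e1 : ηθ t θ ^ (a-1) * ηθ t θ = ηθ t θ ^ a := by
      have h1 := Real.rpow_add_one hne (a-1)
      rw [show a-1+1 = a by ring] at h1
      exact h1.symm
    have hXtw : Xt t θ * ηθ t θ = a * (X t θ * ηtθ t θ) := by
      simp only [hXt, hX]
      linear_combination (a * ηtθ t θ) * e1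
    have hQX : Q t θ * XΘ t θ / X t θ = Fn t θ * XΘ t θ := by
      rw [hQF t ht θ]
      have hx := (hXpos ht θ).ne'
      field_simp
    have hval : -γ * D t θ + σ * ((Fn t θ * X t θ * G t θ + Xt t θ * ηθ t θ)
        + (Xt t θ * ηθ t θ + X t θ * ηtθ t θ)) = Fn t θ * Y t θ := by
      simp only [hY, hD]
      rw [hQX]
      linear_combination 2*σ*hXtw + 2*σ*(X t θ * ηtθ t θ)*ha
        - (lam*σ/2 * ηtθ t θ * X t θ) * hγlam
    rw [hval] at hshape
    exact hshape
  · -- energy identity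
    intro t ht
    rw [← intervalIntegral.integral_const_mul]
    apply integral_congr
    intro φ hφ
    have hp := hw ht φ
    simp only [hX, hXt]
    have h1 : (ηθ t φ ^ a) ^ (γ-2) = ηθ t φ ^ (a*(γ-2)) := (Real.rpow_mul hp.le a (γ-2)).symm
    have h2 : (a * ηθ t φ ^ (a-1) * ηtθ t φ)^2
        = a^2 * (ηθ t φ^(a-1) * ηθ t φ^(a-1)) * ηtθ t φ^2 := by ring
    have h3 : ηθ t φ^(a-1) * ηθ t φ^(a-1) = ηθ t φ ^ ((a-1)+(a-1)) :=
      (Real.rpow_add hp _ _).symm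
    have h4 : ηθ t φ ^ (a*(γ-2)) * ηθ t φ ^ ((a-1)+(a-1)) = (ηθ t φ)⁻¹ := by
      rw [← Real.rpow_add hp, show a*(γ-2) + ((a-1)+(a-1)) = a*γ-2 by ring, haγ]
      norm_num
      exact Real.rpow_neg_one _
    have h5 : γ^2 * a^2 = 1 := by linear_combination (γ*a+1)*hγa
    rw [h1, h2, h3, div_eq_mul_inv, ← h4]
    linear_combination (-(ηθ t φ ^ (a*(γ-2)) * ηθ t φ ^ ((a-1)+(a-1)) * ηtθ t φ^2)) * h5
  · -- X(0) = 1
    intro θ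
    simp only [hX]
    rw [hθ0 θ]
    exact Real.one_rpow a
  · -- Xt(0)
    intro θ
    simp only [hXt]
    rw [hθ0 θ, htθ0 θ, Real.one_rpow, ← h1γ]
    ring
  · -- Y(0) = 0
    intro θ
    simp only [hY, hXΘ, hG]
    rw [hθθ0 θ, integral_same]
    ring
  · -- Yt(0)
    intro θ
    simp only [hYt, hM, hXt, hX, hG]
    rw [hθ0 θ, hθθ0 θ, htθθ0 θ, integral_same, Real.one_rpow, Real.one_rpow, Real.one_rpow]
    linear_combination (-(deriv (deriv u₀) θ)) * hγa
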